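/- Fix real numbers t0 < t1 and 0 ≤ x_min < x_max. Let ψ : [t0,t1] × [x_min,x_max] → ℝ be C⁴ and satisfy ∂_t ψ(t,x) + ∂_x ψ(t,x) = 0 for all (t,x), with boundary values ψ(t, x_min) = 0 and ψ(t, x_max) = 0 for all t ∈ [t0,t1]. Then the third-moment output y(t) = ∫_{x_min}^{x_max} x³ ψ(t,x) dx satisfies y⁗(t) = 0 for all t ∈ [t0,t1]; equivalently, y coincides on [t0,t1] with a polynomial of degree at most 3. -/

import Mathlib

set_option autoImplicit false


open MeasureTheory intervalIntegral Set

/-- Integral shift lemma: integrating `x³ · f(x-s)` (with `f` cut off outside `[xmin,xmax]`)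
over `[xmin,xmax]` equals integrating `(u+s)³ f(u)` over `[xmin,xmax]`, provided `f` vanishes
at `xmin` and on the top part `[xmax-s, xmax]`. -/
lemma stmt10_shift (xmin xmax s : ℝ) (hx : xmin ≤ xmax) (hs : 0 ≤ s) (f : ℝ → ℝ)
    (hf : ContinuousOn f (Set.Icc xmin xmax)) (hmin : f xmin = 0)
    (htop : ∀ u ∈ Set.Icc xmin xmax, xmax - s ≤ u → f u = 0) :
    (∫ x in xmin..xmax, x ^ 3 * (if xmin ≤ x - s ∧ x - s ≤ xmax then f (x - s) else 0))
      = ∫ u in xmin..xmax, (u + s) ^ 3 * f u := by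
  set h : ℝ → ℝ := fun x => x ^ 3 * (if xmin ≤ x - s ∧ x - s ≤ xmax then f (x - s) else 0)
    with hhdef
  -- h vanishes on [xmin, xmin+s]
  have hz1 : ∀ x ∈ Set.Icc xmin (xmin + s), h x = 0 := by
    intro x hxm
    rw [hhdef]
    by_cases hc : xmin ≤ x - s ∧ x - s ≤ xmax
    · have hxe : x - s = xmin := le_antisymm (by linarith [hxm.2]) hc.1
      simp only [if_pos hc, hxe, hmin, mul_zero, ite_self]
    · simp only [if_neg hc, mul_zero]
  -- h vanishes on [xmax, xmax+s]
  have hz2 : ∀ x ∈ Set.Icc xmax (xmax + s), h x = 0 := by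
    intro x hxm
    rw [hhdef]
    by_cases hc : xmin ≤ x - s ∧ x - s ≤ xmax
    · have : f (x - s) = 0 := htop _ ⟨hc.1, hc.2⟩ (by linarith [hxm.1])
      simp only [if_pos hc, this, mul_zero, ite_self]
    · simp only [if_neg hc, mul_zero]
  -- integrability on [xmin+s, xmax+s]
  have I1 : IntervalIntegrable h volume (xmin + s) (xmax + s) := by
    apply ContinuousOn.intervalIntegrable
    rw [Set.uIcc_of_le (by linarith)]
    have hcont : ContinuousOn (fun x => x ^ 3 * f (x - s)) (Set.Icc (xmin + s) (xmax + s)) := by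
      apply ContinuousOn.mul
      · exact (continuous_pow 3).continuousOn
      · exact hf.comp (continuous_id.sub continuous_const).continuousOn
          (fun x hxm => ⟨by linarith [hxm.1], by linarith [hxm.2]⟩)
    apply hcont.congr
    intro x hxm
    rw [hhdef]
    have hc : xmin ≤ x - s ∧ x - s ≤ xmax := ⟨by linarith [hxm.1], by linarith [hxm.2]⟩
    simp [hc]
  have I2 : IntervalIntegrable h volume xmin (xmin + s) := by
    apply ContinuousOn.intervalIntegrable
    rw [Set.uIcc_of_le (by linarith)]
    exact continuousOn_const.congr (fun x hxm => hz1 x hxm)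
  have I3 : IntervalIntegrable h volume xmax (xmax + s) := by
    apply ContinuousOn.intervalIntegrable
    rw [Set.uIcc_of_le (by linarith)]
    exact continuousOn_const.congr (fun x hxm => hz2 x hxm)
  have Iac : IntervalIntegrable h volume xmin (xmax + s) := I2.trans I1
  have I4 : IntervalIntegrable h volume xmin xmax := by
    apply Iac.mono_set
    rw [Set.uIcc_of_le hx, Set.uIcc_of_le (by linarith)]
    exact Set.Icc_subset_Icc le_rfl (by linarith)
  have e2 : (∫ x in xmin..(xmin + s), h x) = 0 := by
    rw [intervalIntegral.integral_congr (g := fun _ => (0 : ℝ))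
      (fun x hxm => hz1 x (by rwa [Set.uIcc_of_le (by linarith)] at hxm))]
    simp
  have e3 : (∫ x in xmax..(xmax + s), h x) = 0 := by
    rw [intervalIntegral.integral_congr (g := fun _ => (0 : ℝ))
      (fun x hxm => hz2 x (by rwa [Set.uIcc_of_le (by linarith)] at hxm))]
    simp
  have adj1 : (∫ x in xmin..xmax, h x) + (∫ x in xmax..(xmax + s), h x)
      = ∫ x in xmin..(xmax + s), h x :=
    intervalIntegral.integral_add_adjacent_intervals I4 I3
  have adj2 : (∫ x in xmin..(xmin + s), h x) + (∫ x in (xmin + s)..(xmax + s), h x)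
      = ∫ x in xmin..(xmax + s), h x :=
    intervalIntegral.integral_add_adjacent_intervals I2 I1
  have emain : (∫ x in xmin..xmax, h x) = ∫ x in (xmin + s)..(xmax + s), h x := by
    rw [e3, add_zero] at adj1
    rw [e2, zero_add] at adj2
    rw [adj1, adj2]
  calc (∫ x in xmin..xmax, h x) = ∫ x in (xmin + s)..(xmax + s), h x := emain
    _ = ∫ x in (xmin + s)..(xmax + s),
          (fun u => (u + s) ^ 3 * (if xmin ≤ u ∧ u ≤ xmax then f u else 0)) (x - s) := by
        apply intervalIntegral.integral_congr
        intro x _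
        rw [hhdef]
        have : x - s + s = x := by ring
        simp only [this]
    _ = ∫ u in (xmin + s - s)..(xmax + s - s),
          (u + s) ^ 3 * (if xmin ≤ u ∧ u ≤ xmax then f u else 0) :=
        intervalIntegral.integral_comp_sub_right (fun u => (u + s) ^ 3 * (if xmin ≤ u ∧ u ≤ xmax then f u else 0)) s
    _ = ∫ u in xmin..xmax, (u + s) ^ 3 * (if xmin ≤ u ∧ u ≤ xmax then f u else 0) := by
        norm_num
    _ = ∫ u in xmin..xmax, (u + s) ^ 3 * f u := by
        apply intervalIntegral.integral_congr
        intro u hu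
        rw [Set.uIcc_of_le hx] at hu
        simp [hu.1, hu.2]

/-- Non-observability key step: for the unit-speed transport equation `∂ₜψ + ∂ₓψ = 0` with zero
boundary values at both `xmin` and `xmax`, the third-moment output `y(t) = ∫ x³ ψ(t,x) dx`
has vanishing fourth derivative; equivalently, it coincides with a polynomial
of degree at most 3 on `[t0,t1]`. -/
theorem stmt10 (t0 t1 xmin xmax : ℝ) (ht : t0 < t1) (hx0 : 0 ≤ xmin) (hx : xmin < xmax)
    (ψ : ℝ → ℝ → ℝ)
    (hC : ContDiffOn ℝ 4 (fun p : ℝ × ℝ => ψ p.1 p.2) (Set.Icc t0 t1 ×ˢ Set.Icc xmin xmax))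
    (hPDE : ∀ t ∈ Set.Icc t0 t1, ∀ x ∈ Set.Icc xmin xmax,
      derivWithin (fun s => ψ s x) (Set.Icc t0 t1) t
        + derivWithin (fun ξ => ψ t ξ) (Set.Icc xmin xmax) x = 0)
    (hbmin : ∀ t ∈ Set.Icc t0 t1, ψ t xmin = 0)
    (hbmax : ∀ t ∈ Set.Icc t0 t1, ψ t xmax = 0) :
    (∃ y1 y2 y3 : ℝ → ℝ,
      (∀ t ∈ Set.Icc t0 t1,
        HasDerivWithinAt (fun s => ∫ x in xmin..xmax, x ^ 3 * ψ s x) (y1 t)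
          (Set.Icc t0 t1) t) ∧
      (∀ t ∈ Set.Icc t0 t1, HasDerivWithinAt y1 (y2 t) (Set.Icc t0 t1) t) ∧
      (∀ t ∈ Set.Icc t0 t1, HasDerivWithinAt y2 (y3 t) (Set.Icc t0 t1) t) ∧
      (∀ t ∈ Set.Icc t0 t1, HasDerivWithinAt y3 0 (Set.Icc t0 t1) t)) ∧
    (∃ p : Polynomial ℝ, p.degree ≤ 3 ∧
      ∀ t ∈ Set.Icc t0 t1, (∫ x in xmin..xmax, x ^ 3 * ψ t x) = p.eval t) := by
  classical
  set K : Set (ℝ × ℝ) := Set.Icc t0 t1 ×ˢ Set.Icc xmin xmax with hKdef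
  set F : ℝ × ℝ → ℝ := fun p => ψ p.1 p.2 with hFdef
  have hdiff : DifferentiableOn ℝ F K := hC.differentiableOn (by norm_num)
  -- PDE in Fréchet form: the derivative in direction (1,1) vanishes
  have hA : ∀ p ∈ K, fderivWithin ℝ F K p (1, 1) = 0 := by
    rintro ⟨t, x⟩ hp
    have htI : t ∈ Set.Icc t0 t1 := hp.1
    have hxI : x ∈ Set.Icc xmin xmax := hp.2
    have hF := (hdiff _ hp).hasFDerivWithinAt
    set L := fderivWithin ℝ F K (t, x) with hLdef
    have h1 : HasDerivWithinAt (fun s : ℝ => ψ s x) (L ((1 : ℝ), (0 : ℝ)))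
        (Set.Icc t0 t1) t := by
      have hφ : HasDerivWithinAt (fun s : ℝ => ((s, x) : ℝ × ℝ)) ((1 : ℝ), (0 : ℝ))
          (Set.Icc t0 t1) t :=
        ((hasDerivAt_id t).prodMk (hasDerivAt_const t x)).hasDerivWithinAt
      exact hF.comp_hasDerivWithinAt t hφ (fun s hs => Set.mk_mem_prod hs hxI)
    have h2 : HasDerivWithinAt (fun ξ : ℝ => ψ t ξ) (L ((0 : ℝ), (1 : ℝ)))
        (Set.Icc xmin xmax) x := by
      have hφ : HasDerivWithinAt (fun ξ : ℝ => ((t, ξ) : ℝ × ℝ)) ((0 : ℝ), (1 : ℝ))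
          (Set.Icc xmin xmax) x :=
        ((hasDerivAt_const x t).prodMk (hasDerivAt_id x)).hasDerivWithinAt
      exact hF.comp_hasDerivWithinAt x hφ (fun ξ hξ => Set.mk_mem_prod htI hξ)
    have e1 : derivWithin (fun s => ψ s x) (Set.Icc t0 t1) t = L ((1 : ℝ), (0 : ℝ)) :=
      h1.derivWithin (uniqueDiffOn_Icc ht t htI)
    have e2 : derivWithin (fun ξ => ψ t ξ) (Set.Icc xmin xmax) x = L ((0 : ℝ), (1 : ℝ)) :=
      h2.derivWithin (uniqueDiffOn_Icc hx x hxI)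
    have hpde := hPDE t htI x hxI
    rw [e1, e2] at hpde
    have h11 : ((1 : ℝ), (1 : ℝ)) = ((1 : ℝ), (0 : ℝ)) + ((0 : ℝ), (1 : ℝ)) := by simp
    rw [h11, map_add]
    exact hpde
  -- constancy along characteristics
  have hchar : ∀ p q : ℝ × ℝ, p ∈ K → q ∈ K → q.1 - p.1 = q.2 - p.2 → 0 ≤ q.1 - p.1 →
      ψ q.1 q.2 = ψ p.1 p.2 := by
    rintro ⟨a, b⟩ ⟨c, e⟩ hp hq hd hd0
    simp only at hd hd0 ⊢
    set d := c - a with hddef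
    have hpa : a ∈ Set.Icc t0 t1 := hp.1
    have hpb : b ∈ Set.Icc xmin xmax := hp.2
    have hqc : c ∈ Set.Icc t0 t1 := hq.1
    have hqe : e ∈ Set.Icc xmin xmax := hq.2
    have hmem : ∀ s ∈ Set.Icc (0 : ℝ) d, ((a + s, b + s) : ℝ × ℝ) ∈ K := by
      intro s hs
      exact Set.mk_mem_prod
        ⟨by linarith [hpa.1, hs.1], by linarith [hqc.2, hs.2]⟩
        ⟨by linarith [hpb.1, hs.1], by linarith [hqe.2, hs.2]⟩
    have key : ∀ s ∈ Set.Icc (0 : ℝ) d,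
        HasDerivWithinAt (fun s : ℝ => ψ (a + s) (b + s)) ((fun _ : ℝ => (0 : ℝ)) s)
          (Set.Icc 0 d) s := by
      intro s hs
      have hγ : HasDerivWithinAt (fun s : ℝ => ((a + s, b + s) : ℝ × ℝ)) ((1 : ℝ), (1 : ℝ))
          (Set.Icc 0 d) s :=
        (((hasDerivAt_id s).const_add a).prodMk ((hasDerivAt_id s).const_add b)).hasDerivWithinAt
      have h := ((hdiff _ (hmem s hs)).hasFDerivWithinAt).comp_hasDerivWithinAt s hγ
        (fun u hu => hmem u hu)
      rw [hA _ (hmem s hs)] at h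
      exact h
    have hbnd := Convex.norm_image_sub_le_of_norm_hasDerivWithin_le (C := 0) key
      (fun s _ => by simp) (convex_Icc 0 d) (Set.left_mem_Icc.mpr hd0)
      (Set.right_mem_Icc.mpr hd0)
    have heq : ψ (a + d) (b + d) = ψ (a + 0) (b + 0) := by
      have : ‖ψ (a + d) (b + d) - ψ (a + 0) (b + 0)‖ ≤ 0 := by
        simpa using hbnd
      have := norm_le_zero_iff.mp this
      linarith [sub_eq_zero.mp this]
    have hac : a + d = c := by rw [hddef]; ring
    have hbe : b + d = e := by linarith [hd]
    rw [hac, hbe] at heq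
    simpa using heq
  -- consequences of constancy
  have hz1 : ∀ t ∈ Set.Icc t0 t1, ∀ x ∈ Set.Icc xmin xmax, x - xmin ≤ t - t0 → ψ t x = 0 := by
    intro t htI x hxI hle
    have := hchar (t - (x - xmin), xmin) (t, x)
      (Set.mk_mem_prod ⟨by linarith [hxI.1], by linarith [htI.2, hxI.1]⟩
        ⟨le_refl _, hx.le⟩)
      (Set.mk_mem_prod htI hxI) (by dsimp only; ring) (by dsimp only; linarith [hxI.1])
    simp only at this
    rw [this]
    exact hbmin _ ⟨by linarith [htI.1], by linarith [htI.2, hxI.1]⟩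
  have hz2 : ∀ u ∈ Set.Icc xmin xmax, xmax - u ≤ t1 - t0 → ψ t0 u = 0 := by
    intro u huI hle
    have := hchar (t0, u) (t0 + (xmax - u), xmax)
      (Set.mk_mem_prod ⟨le_refl _, ht.le⟩ huI)
      (Set.mk_mem_prod ⟨by linarith [huI.2], by linarith⟩ ⟨hx.le, le_refl _⟩)
      (by dsimp only; ring) (by dsimp only; linarith [huI.2])
    simp only at this
    rw [← this]
    exact hbmax _ ⟨by linarith [huI.2], by linarith⟩
  have hrep : ∀ t ∈ Set.Icc t0 t1, ∀ x ∈ Set.Icc xmin xmax, xmin ≤ x - (t - t0) →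
      ψ t x = ψ t0 (x - (t - t0)) := by
    intro t htI x hxI hle
    have := hchar (t0, x - (t - t0)) (t, x)
      (Set.mk_mem_prod ⟨le_refl _, ht.le⟩ ⟨hle, by linarith [hxI.2, htI.1]⟩)
      (Set.mk_mem_prod htI hxI) (by dsimp only; ring) (by dsimp only; linarith [htI.1])
    simpa using this
  -- continuity of slices
  have hcont : ∀ t ∈ Set.Icc t0 t1, ContinuousOn (fun x => ψ t x) (Set.Icc xmin xmax) := by
    intro t htI
    have : ContinuousOn (F ∘ fun x : ℝ => ((t, x) : ℝ × ℝ)) (Set.Icc xmin xmax) :=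
      hC.continuousOn.comp ((continuous_const.prodMk continuous_id).continuousOn)
        (fun x hxI => Set.mk_mem_prod htI hxI)
    exact this
  -- moments of the initial datum
  set m0 : ℝ := ∫ u in xmin..xmax, ψ t0 u with hm0
  set m1 : ℝ := ∫ u in xmin..xmax, u * ψ t0 u with hm1
  set m2 : ℝ := ∫ u in xmin..xmax, u ^ 2 * ψ t0 u with hm2
  set m3 : ℝ := ∫ u in xmin..xmax, u ^ 3 * ψ t0 u with hm3
  have ht0I : t0 ∈ Set.Icc t0 t1 := ⟨le_refl _, ht.le⟩
  -- the main polynomial formula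
  have main : ∀ t ∈ Set.Icc t0 t1, (∫ x in xmin..xmax, x ^ 3 * ψ t x)
      = m3 + 3 * m2 * (t - t0) + 3 * m1 * (t - t0) ^ 2 + m0 * (t - t0) ^ 3 := by
    intro t htI
    set s : ℝ := t - t0 with hsdef
    have hs0 : 0 ≤ s := by rw [hsdef]; linarith [htI.1]
    have hs1 : s ≤ t1 - t0 := by rw [hsdef]; linarith [htI.2]
    have step1 : (∫ x in xmin..xmax, x ^ 3 * ψ t x)
        = ∫ x in xmin..xmax, x ^ 3 * (if xmin ≤ x - s ∧ x - s ≤ xmax then ψ t0 (x - s) else 0) := by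
      apply intervalIntegral.integral_congr
      intro x hxm
      rw [Set.uIcc_of_le hx.le] at hxm
      show x ^ 3 * ψ t x = x ^ 3 * (if xmin ≤ x - s ∧ x - s ≤ xmax then ψ t0 (x - s) else 0)
      by_cases hc : xmin ≤ x - s
      · have hc2 : x - s ≤ xmax := by linarith [hxm.2]
        rw [if_pos ⟨hc, hc2⟩]
        rw [hrep t htI x hxm (by rw [← hsdef]; exact hc)]
      · push_neg at hc
        rw [if_neg (fun hco => absurd hco.1 (not_le.mpr hc)), mul_zero]
        rw [hz1 t htI x hxm (by linarith), mul_zero]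
    have step2 := stmt10_shift xmin xmax s hx.le hs0 (ψ t0)
      (hcont t0 ht0I) (hbmin t0 ht0I)
      (fun u huI hle => hz2 u huI (by linarith [hle]))
    rw [step1, step2]
    -- expand the cube
    have hI : ∀ n : ℕ, IntervalIntegrable (fun u => u ^ n * ψ t0 u) MeasureTheory.volume
        xmin xmax := by
      intro n
      apply ContinuousOn.intervalIntegrable
      rw [Set.uIcc_of_le hx.le]
      exact ((continuous_pow n).continuousOn).mul (hcont t0 ht0I)
    have expand : (∫ u in xmin..xmax, (u + s) ^ 3 * ψ t0 u)
        = ∫ u in xmin..xmax, (u ^ 3 * ψ t0 u + ((3 * s) * (u ^ 2 * ψ t0 u)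
            + ((3 * s ^ 2) * (u ^ 1 * ψ t0 u) + (s ^ 3) * (u ^ 0 * ψ t0 u)))) := by
      apply intervalIntegral.integral_congr
      intro u _
      ring
    rw [expand]
    rw [intervalIntegral.integral_add (hI 3)
      (((hI 2).const_mul _).add (((hI 1).const_mul _).add ((hI 0).const_mul _)))]
    rw [intervalIntegral.integral_add ((hI 2).const_mul _)
      (((hI 1).const_mul _).add ((hI 0).const_mul _))]
    rw [intervalIntegral.integral_add ((hI 1).const_mul _) ((hI 0).const_mul _)]
    rw [intervalIntegral.integral_const_mul, intervalIntegral.integral_const_mul,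
      intervalIntegral.integral_const_mul]
    have e1 : (∫ u in xmin..xmax, u ^ 1 * ψ t0 u) = m1 := by
      rw [hm1]; apply intervalIntegral.integral_congr; intro u _; ring
    have e0 : (∫ u in xmin..xmax, u ^ 0 * ψ t0 u) = m0 := by
      rw [hm0]; apply intervalIntegral.integral_congr; intro u _; ring
    rw [e1, e0, ← hm3, ← hm2]
    ring
  -- derivatives of the cubic polynomial
  refine ⟨⟨fun t => 3 * m2 + 6 * m1 * (t - t0) + 3 * m0 * (t - t0) ^ 2,
    fun t => 6 * m1 + 6 * m0 * (t - t0), fun t => 6 * m0, ?_, ?_, ?_, ?_⟩, ?_⟩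
  · intro t htI
    have hb : HasDerivAt (fun u : ℝ => u - t0) 1 t := (hasDerivAt_id t).sub_const t0
    have H := (((hasDerivAt_const t m3).add (hb.const_mul (3 * m2))).add
      ((hb.pow 2).const_mul (3 * m1))).add ((hb.pow 3).const_mul m0)
    have H' : HasDerivAt
        (fun t : ℝ => m3 + 3 * m2 * (t - t0) + 3 * m1 * (t - t0) ^ 2 + m0 * (t - t0) ^ 3)
        (3 * m2 + 6 * m1 * (t - t0) + 3 * m0 * (t - t0) ^ 2) t := by
      exact H.congr_deriv (by ring)
    exact (H'.hasDerivWithinAt).congr (fun u hu => main u hu) (main t htI)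
  · intro t htI
    have hb : HasDerivAt (fun u : ℝ => u - t0) 1 t := (hasDerivAt_id t).sub_const t0
    have H := ((hasDerivAt_const t (3 * m2)).add (hb.const_mul (6 * m1))).add
      ((hb.pow 2).const_mul (3 * m0))
    have H' : HasDerivAt
        (fun t : ℝ => 3 * m2 + 6 * m1 * (t - t0) + 3 * m0 * (t - t0) ^ 2)
        (6 * m1 + 6 * m0 * (t - t0)) t := by
      exact H.congr_deriv (by ring)
    exact H'.hasDerivWithinAt
  · intro t htI
    have hb : HasDerivAt (fun u : ℝ => u - t0) 1 t := (hasDerivAt_id t).sub_const t0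
    have H := (hasDerivAt_const t (6 * m1)).add (hb.const_mul (6 * m0))
    have H' : HasDerivAt (fun t : ℝ => 6 * m1 + 6 * m0 * (t - t0)) (6 * m0) t := by
      exact H.congr_deriv (by ring)
    exact H'.hasDerivWithinAt
  · intro t htI
    exact (hasDerivAt_const t (6 * m0)).hasDerivWithinAt
  · refine ⟨Polynomial.C m3 + Polynomial.C (3 * m2) * (Polynomial.X - Polynomial.C t0)
      + Polynomial.C (3 * m1) * (Polynomial.X - Polynomial.C t0) ^ 2
      + Polynomial.C m0 * (Polynomial.X - Polynomial.C t0) ^ 3, ?_, ?_⟩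
    · compute_degree
    · intro t htI
      rw [main t htI]
      simp only [Polynomial.eval_add, Polynomial.eval_mul, Polynomial.eval_pow,
        Polynomial.eval_sub, Polynomial.eval_X, Polynomial.eval_C]
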